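/- For the moment problem with monomials of degree at most 2 in n variables on the cube [0,1]^n, consider the points P = {0, e_1,...,e_n, e_i + e_j (1 ≤ i < j ≤ n)} ⊆ {0,1}^n. The vectors s_A(x) for x ∈ P, where s_A(x) = (x^α)_{|α| ≤ 2}, are linearly independent; hence the rank of the matrix (s_A(x))_{x ∈ Z(𝔮)} over the zero set Z(𝔮) = {0,1}^n equals C(n+2,2) − n. -/

import Mathlib

open Finset

namespace RankQuadAux

variable {n : ℕ}

/-- The index type for the chosen points. -/
abbrev IT (n : ℕ) := Unit ⊕ Fin n ⊕ {q : Fin n × Fin n // q.1 < q.2}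

/-- The multi-indices of degree at most 2. -/
abbrev σn (n : ℕ) := {α : Fin n →₀ ℕ // (∑ i, α i) ≤ 2}

/-- Finsets of cardinality at most 2. -/
abbrev Tn (n : ℕ) := {s : Finset (Fin n) // s.card ≤ 2}

/-- The points `0, eᵢ, eᵢ+eⱼ`. -/
def P (n : ℕ) : IT n → (Fin n → ℝ) :=
  fun t => match t with
    | Sum.inl _ => fun _ => 0
    | Sum.inr (Sum.inl i) => fun l => if l = i then 1 else 0
    | Sum.inr (Sum.inr q) => fun l => if l = q.1.1 ∨ l = q.1.2 then 1 else 0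

lemma P01 (t : IT n) (i : Fin n) : P n t i = 0 ∨ P n t i = 1 := by
  rcases t with _ | t
  · exact Or.inl rfl
  · rcases t with k | q <;> simp only [P] <;> split_ifs <;> simp

lemma prod_pow_eq_ite (x : Fin n → ℝ) (hx : ∀ i, x i = 0 ∨ x i = 1)
    (α : Fin n →₀ ℕ) :
    (∏ i, x i ^ α i) = if ∀ l, α l ≠ 0 → x l = 1 then 1 else 0 := by
  split_ifs with h
  · refine Finset.prod_eq_one fun i _ => ?_
    by_cases hi : α i = 0
    · simp [hi]
    · rw [h i hi, one_pow]
  · push_neg at h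
    obtain ⟨l, hl, hxl⟩ := h
    refine Finset.prod_eq_zero (Finset.mem_univ l) ?_
    rcases hx l with h0 | h1
    · rw [h0, zero_pow hl]
    · exact absurd h1 hxl

lemma ite01_eq_one (Q : Prop) [Decidable Q] : ((if Q then (1:ℝ) else 0) = 1) ↔ Q := by
  split_ifs with h <;> simp [h]

lemma eval0 (α : Fin n →₀ ℕ) :
    (∏ i, P n (Sum.inl ()) i ^ α i) = if ∀ l, α l ≠ 0 → False then 1 else 0 := by
  rw [prod_pow_eq_ite _ (P01 _)]
  exact if_congr (forall_congr' fun l => imp_congr Iff.rfl (by norm_num [P])) rfl rfl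

lemma eval1 (k : Fin n) (α : Fin n →₀ ℕ) :
    (∏ i, P n (Sum.inr (Sum.inl k)) i ^ α i) = if ∀ l, α l ≠ 0 → l = k then 1 else 0 := by
  rw [prod_pow_eq_ite _ (P01 _)]
  refine if_congr (forall_congr' fun l => imp_congr Iff.rfl ?_) rfl rfl
  show (if l = k then (1:ℝ) else 0) = 1 ↔ _
  exact ite01_eq_one _

lemma eval2 (q : {q : Fin n × Fin n // q.1 < q.2}) (α : Fin n →₀ ℕ) :
    (∏ i, P n (Sum.inr (Sum.inr q)) i ^ α i)
      = if ∀ l, α l ≠ 0 → l = q.1.1 ∨ l = q.1.2 then 1 else 0 := by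
  rw [prod_pow_eq_ite _ (P01 _)]
  refine if_congr (forall_congr' fun l => imp_congr Iff.rfl ?_) rfl rfl
  show (if l = q.1.1 ∨ l = q.1.2 then (1:ℝ) else 0) = 1 ↔ _
  exact ite01_eq_one _

lemma single_ne_iff (k l : Fin n) : (Finsupp.single k 1 : Fin n →₀ ℕ) l ≠ 0 ↔ l = k := by
  simp [Finsupp.single_apply_eq_zero]

lemma pair_ne_iff (a b l : Fin n) :
    ((Finsupp.single a 1 + Finsupp.single b 1 : Fin n →₀ ℕ)) l ≠ 0 ↔ l = a ∨ l = b := by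
  simp only [Finsupp.add_apply, Finsupp.single_apply]
  split_ifs with h1 h2 h2 <;> simp_all [eq_comm]

lemma sum_single (k : Fin n) : (∑ i, (Finsupp.single k 1 : Fin n →₀ ℕ) i) = 1 := by
  simp [Finsupp.single_apply, Finset.sum_ite_eq]

lemma sum_pair (a b : Fin n) :
    (∑ i, ((Finsupp.single a 1 + Finsupp.single b 1 : Fin n →₀ ℕ)) i) = 2 := by
  simp [Finsupp.add_apply, Finset.sum_add_distrib, Finsupp.single_apply, Finset.sum_ite_eq]

/-- Linear independence of the moment vectors at the chosen points. -/
lemma li_aux (n : ℕ) :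
    LinearIndependent ℝ (fun t : IT n => (fun α : σn n => ∏ i, P n t i ^ (α.1 i))) := by
  classical
  rw [Fintype.linearIndependent_iff]
  intro g hg
  have hA : ∀ α : σn n,
      g (Sum.inl ()) * (∏ i, P n (Sum.inl ()) i ^ (α.1 i))
      + ((∑ k, g (Sum.inr (Sum.inl k)) * ∏ i, P n (Sum.inr (Sum.inl k)) i ^ (α.1 i))
      + ∑ q : {q : Fin n × Fin n // q.1 < q.2},
          g (Sum.inr (Sum.inr q)) * ∏ i, P n (Sum.inr (Sum.inr q)) i ^ (α.1 i)) = 0 := by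
    intro α
    have h := congrFun hg α
    simp only [Finset.sum_apply, Pi.smul_apply, smul_eq_mul, Pi.zero_apply,
      Fintype.sum_sum_type, Finset.univ_unique, Finset.sum_singleton] at h
    exact h
  have hpair : ∀ q : {q : Fin n × Fin n // q.1 < q.2}, g (Sum.inr (Sum.inr q)) = 0 := by
    rintro ⟨⟨a, b⟩, hab⟩
    have habne : a ≠ b := Fin.ne_of_lt hab
    have h := hA ⟨Finsupp.single a 1 + Finsupp.single b 1, le_of_eq (sum_pair a b)⟩
    simp only [eval0, eval1, eval2, pair_ne_iff] at h
    rw [if_neg (fun H => H a (Or.inl rfl))] at h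
    have c1 : ∀ k : Fin n,
        (if ∀ l : Fin n, (l = a ∨ l = b) → l = k then (1:ℝ) else 0) = 0 := fun k =>
      if_neg (fun H => habne ((H a (Or.inl rfl)).trans (H b (Or.inr rfl)).symm))
    have c2 : ∀ q : {q : Fin n × Fin n // q.1 < q.2},
        (if ∀ l : Fin n, (l = a ∨ l = b) → l = q.1.1 ∨ l = q.1.2 then (1:ℝ) else 0)
          = if q = ⟨(a, b), hab⟩ then 1 else 0 := by
      rintro ⟨⟨c, d⟩, hcd⟩
      by_cases hq : (⟨(c, d), hcd⟩ : {q : Fin n × Fin n // q.1 < q.2}) = ⟨(a, b), hab⟩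
      · rw [if_pos ?_, if_pos hq]
        have h1 : c = a := congrArg (fun z => z.1.1) hq
        have h2 : d = b := congrArg (fun z => z.1.2) hq
        rintro l (rfl | rfl)
        · exact Or.inl h1.symm
        · exact Or.inr h2.symm
      · rw [if_neg ?_, if_neg hq]
        intro H
        apply hq
        have h1 := H a (Or.inl rfl)
        have h2 := H b (Or.inr rfl)
        have hab' : (a : ℕ) < b := hab
        have hcd' : (c : ℕ) < d := hcd
        apply Subtype.ext
        simp only [Fin.ext_iff] at h1 h2
        simp only [Prod.ext_iff, Fin.ext_iff]
        omega
    simp only [c1, c2, mul_zero, mul_ite, mul_one, Finset.sum_const_zero,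
      Finset.sum_ite_eq', Finset.mem_univ, if_pos] at h
    simpa using h
  have hsingle : ∀ k : Fin n, g (Sum.inr (Sum.inl k)) = 0 := by
    intro k
    have h := hA ⟨Finsupp.single k 1, le_of_eq_of_le (sum_single k) one_le_two⟩
    simp only [eval0, eval1, eval2, single_ne_iff] at h
    rw [if_neg (fun H => H k rfl)] at h
    have c1 : ∀ k' : Fin n,
        (if ∀ l : Fin n, l = k → l = k' then (1:ℝ) else 0) = if k' = k then 1 else 0 := by
      intro k'
      by_cases hq : k' = k
      · rw [if_pos (by rintro l rfl; exact hq.symm), if_pos hq]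
      · rw [if_neg (fun H => hq (H k rfl).symm), if_neg hq]
    simp only [c1, hpair, zero_mul, Finset.sum_const_zero, mul_ite, mul_one, mul_zero,
      Finset.sum_ite_eq', Finset.mem_univ, if_pos] at h
    simpa using h
  have hzero : g (Sum.inl ()) = 0 := by
    have h := hA ⟨0, by simp⟩
    simp only [eval0, eval1, eval2, Finsupp.coe_zero, Pi.zero_apply, ne_eq,
      not_true_eq_false, false_implies, forall_const, if_true, mul_one, hpair, hsingle,
      zero_mul, Finset.sum_const_zero, add_zero] at h
    simpa using h
  rintro (⟨⟩ | k | q)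
  · exact hzero
  · exact hsingle k
  · exact hpair q

def pairEquiv (n : ℕ) : {q : Fin n × Fin n // q.1 < q.2} ≃ Σ j : Fin n, Fin j.val where
  toFun q := ⟨q.1.2, ⟨q.1.1.val, q.2⟩⟩
  invFun p := ⟨(⟨p.2.val, lt_trans p.2.isLt p.1.isLt⟩, p.1), p.2.isLt⟩
  left_inv := by rintro ⟨⟨a, b⟩, h⟩; rfl
  right_inv := by rintro ⟨j, i⟩; rfl

lemma card_pairs (n : ℕ) :
    Fintype.card {q : Fin n × Fin n // q.1 < q.2} = n.choose 2 := by
  rw [Fintype.card_congr (pairEquiv n), Fintype.card_sigma]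
  simp only [Fintype.card_fin]
  rw [Fin.sum_univ_eq_sum_range (fun i => i) n, Finset.sum_range_id, Nat.choose_two_right]

lemma card_IT (n : ℕ) : Fintype.card (IT n) = (n + 2).choose 2 - n := by
  rw [Fintype.card_sum, Fintype.card_sum, card_pairs, Fintype.card_unit, Fintype.card_fin]
  have h1 : (n + 2).choose 2 = (n + 1).choose 1 + (n + 1).choose 2 := Nat.choose_succ_succ _ _
  have h2 : (n + 1).choose 2 = n.choose 1 + n.choose 2 := Nat.choose_succ_succ _ _
  have h3 : (n + 1).choose 1 = n + 1 := Nat.choose_one_right _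
  have h4 : n.choose 1 = n := Nat.choose_one_right _
  omega

/-- The support map from multi-indices of degree `≤ 2` to small finsets. -/
def supp' (n : ℕ) : σn n → Tn n := fun α =>
  ⟨α.1.support, by
    have h1 : α.1.support.card ≤ ∑ i ∈ α.1.support, α.1 i := by
      calc α.1.support.card = ∑ _i ∈ α.1.support, 1 := by simp
        _ ≤ ∑ i ∈ α.1.support, α.1 i :=
          Finset.sum_le_sum fun i hi => Nat.one_le_iff_ne_zero.mpr (Finsupp.mem_support_iff.mp hi)
    have h2 : ∑ i ∈ α.1.support, α.1 i ≤ ∑ i, α.1 i :=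
      Finset.sum_le_sum_of_subset (Finset.subset_univ _)
    exact le_trans (le_trans h1 h2) α.2⟩

lemma supp'_surj (n : ℕ) : Function.Surjective (supp' n) := by
  rintro ⟨s, hs⟩
  classical
  refine ⟨⟨⟨s, fun i => if i ∈ s then 1 else 0,
      fun i => by split_ifs <;> simp_all⟩, ?_⟩, rfl⟩
  have h : (∑ i, if i ∈ s then 1 else 0) = s.card := by
    rw [Finset.sum_ite_mem, Finset.univ_inter, Finset.card_eq_sum_ones]
  exact le_of_eq h |>.trans hs

def toSet (n : ℕ) : IT n → Tn n := fun t =>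
  match t with
  | Sum.inl _ => ⟨∅, by simp⟩
  | Sum.inr (Sum.inl i) => ⟨{i}, by simp⟩
  | Sum.inr (Sum.inr q) => ⟨{q.1.1, q.1.2}, Finset.card_insert_le _ _ |>.trans (by simp)⟩

lemma toSet_surj (n : ℕ) : Function.Surjective (toSet n) := by
  rintro ⟨s, hs⟩
  rcases hc : s.card with _ | m
  · exact ⟨Sum.inl (), Subtype.ext (by simp [toSet, (Finset.card_eq_zero.mp hc).symm])⟩
  rcases m with _ | m
  · obtain ⟨i, rfl⟩ := Finset.card_eq_one.mp hc
    exact ⟨Sum.inr (Sum.inl i), Subtype.ext (by simp [toSet])⟩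
  rcases m with _ | m
  · obtain ⟨a, b, hab, rfl⟩ := Finset.card_eq_two.mp hc
    rcases lt_or_gt_of_ne hab with hlt | hgt
    · exact ⟨Sum.inr (Sum.inr ⟨(a, b), hlt⟩), Subtype.ext (by simp [toSet])⟩
    · exact ⟨Sum.inr (Sum.inr ⟨(b, a), hgt⟩), Subtype.ext (by simp [toSet, Finset.pair_comm])⟩
  · omega

lemma card_Tn_le (n : ℕ) : Fintype.card (Tn n) ≤ Fintype.card (IT n) :=
  Fintype.card_le_of_surjective (toSet n) (toSet_surj n)

/-- The rank computation. -/
lemma rank_aux (n : ℕ) :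
    Module.finrank ℝ (Submodule.span ℝ
      ((fun x : Fin n → ℝ => fun α : σn n => ∏ i, x i ^ (α.1 i)) ''
        {x : Fin n → ℝ | ∀ i, x i = 0 ∨ x i = 1})) = (n + 2).choose 2 - n := by
  classical
  set sA := fun x : Fin n → ℝ => fun α : σn n => ∏ i, x i ^ (α.1 i) with hsA
  set Φ : (Tn n → ℝ) →ₗ[ℝ] (σn n → ℝ) := LinearMap.funLeft ℝ ℝ (supp' n) with hΦ
  have hΦinj : Function.Injective Φ :=
    LinearMap.funLeft_injective_of_surjective ℝ ℝ _ (supp'_surj n)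
  have himg : sA '' {x : Fin n → ℝ | ∀ i, x i = 0 ∨ x i = 1} ⊆
      (LinearMap.range Φ : Set (σn n → ℝ)) := by
    rintro _ ⟨x, hx, rfl⟩
    refine ⟨fun s => if ∀ l ∈ s.1, x l = 1 then 1 else 0, ?_⟩
    funext α
    show (if ∀ l ∈ (supp' n α).1, x l = 1 then (1:ℝ) else 0) = sA x α
    rw [hsA]
    dsimp only
    rw [prod_pow_eq_ite x hx]
    refine if_congr ?_ rfl rfl
    constructor
    · intro H l hl
      exact H l (Finsupp.mem_support_iff.mpr hl)
    · intro H l hl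
      exact H l (Finsupp.mem_support_iff.mp hl)
  have hsub1 : Submodule.span ℝ (Set.range (fun t => sA (P n t))) ≤
      Submodule.span ℝ (sA '' {x : Fin n → ℝ | ∀ i, x i = 0 ∨ x i = 1}) :=
    Submodule.span_mono (by rintro _ ⟨t, rfl⟩; exact ⟨P n t, fun i => P01 t i, rfl⟩)
  have hsub2 : Submodule.span ℝ (sA '' {x : Fin n → ℝ | ∀ i, x i = 0 ∨ x i = 1}) ≤
      LinearMap.range Φ := Submodule.span_le.mpr himg
  haveI fd2 : FiniteDimensional ℝ
      (Submodule.span ℝ (sA '' {x : Fin n → ℝ | ∀ i, x i = 0 ∨ x i = 1})) :=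
    Submodule.finiteDimensional_of_le hsub2
  have e1 : Module.finrank ℝ (Submodule.span ℝ (Set.range (fun t => sA (P n t)))) =
      Fintype.card (IT n) := finrank_span_eq_card (li_aux n)
  have e2 : Module.finrank ℝ (LinearMap.range Φ) = Fintype.card (Tn n) := by
    rw [LinearMap.finrank_range_of_inj hΦinj, Module.finrank_pi]
  have le1 := Submodule.finrank_mono hsub1
  have le2 := Submodule.finrank_mono hsub2
  rw [e1] at le1
  rw [e2] at le2
  rw [← card_IT n]
  exact le_antisymm (le2.trans (card_Tn_le n)) le1

end RankQuadAux

/-- For monomials of degree at most `2` in `n` variables: the moment curve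
vectors `s_A(x) = (x^α)_{|α| ≤ 2}` at the points
`P = {0, e₁, …, eₙ, e_i + e_j (i < j)} ⊆ {0,1}^n` are linearly independent;
hence the rank of the family `(s_A(x))_{x ∈ {0,1}^n}` equals
`C(n+2, 2) - n`. -/
theorem rank_quadratic_monomials_on_cube_vertices (n : ℕ) :
    let σ := {α : Fin n →₀ ℕ // (∑ i, α i) ≤ 2}
    let sA : (Fin n → ℝ) → (σ → ℝ) := fun x α => ∏ i, x i ^ (α.1 i)
    let pt : Unit ⊕ Fin n ⊕ {q : Fin n × Fin n // q.1 < q.2} → (Fin n → ℝ) :=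
      fun t => match t with
        | Sum.inl _ => fun _ => 0
        | Sum.inr (Sum.inl i) => fun l => if l = i then 1 else 0
        | Sum.inr (Sum.inr q) => fun l => if l = q.1.1 ∨ l = q.1.2 then 1 else 0
    LinearIndependent ℝ (fun t => sA (pt t)) ∧
      Module.finrank ℝ (Submodule.span ℝ
          (sA '' {x : Fin n → ℝ | ∀ i, x i = 0 ∨ x i = 1})) =
        Nat.choose (n + 2) 2 - n := by
  intro σ sA pt
  have hpt : pt = RankQuadAux.P n := by
    funext t
    rcases t with _ | t
    · rfl
    · rcases t with k | q <;> rfl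
  constructor
  · rw [hpt]
    exact RankQuadAux.li_aux n
  · exact RankQuadAux.rank_aux n
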